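/- Let (X,Y) have standard normal margins and positively dependent copula C. Fix α ∈ (0,1) and suppose -log[1 - C_{V|U}^{-1}(α|u)] ~ k_α [-log(1-u)]^η as u → 1^- for constants k_α > 0, η ∈ (0,1]. Then F_{Y|X}^{-1}(α|x) ~ (2^{1-η} k_α)^{1/2} x^η as x → +∞. -/

import Mathlib

open Real Set Filter Topology

/-- The standard normal CDF `Φ`. -/
noncomputable def stdNormalCDF (x : ℝ) : ℝ :=
  (∫ t in Set.Iic x, Real.exp (-t ^ 2 / 2)) / Real.sqrt (2 * Real.pi)

section Aux
open MeasureTheory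

lemma g_eq : (fun t : ℝ => Real.exp (-t ^ 2 / 2)) = (fun t : ℝ => Real.exp (-(1/2) * t ^ 2)) := by
  funext t; congr 1; ring

lemma g_int : Integrable (fun t : ℝ => Real.exp (-t ^ 2 / 2)) := by
  rw [g_eq]; exact integrable_exp_neg_mul_sq (by norm_num)

lemma g_total : (∫ t : ℝ, Real.exp (-t ^ 2 / 2)) = Real.sqrt (2 * Real.pi) := by
  rw [g_eq, integral_gaussian]; norm_num [div_div_eq_mul_div, mul_comm]

lemma lb_Ioc (a : ℝ) :
    Real.exp (-(|a| + 1) ^ 2 / 2) ≤ ∫ t in Ioc a (a+1), Real.exp (-t ^ 2 / 2) := by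
  have h0 : ∀ t ∈ Ioc a (a+1), Real.exp (-(|a| + 1) ^ 2 / 2) ≤ Real.exp (-t ^ 2 / 2) := by
    intro t ht
    apply Real.exp_le_exp.2
    have h1 : t ^ 2 ≤ (|a| + 1) ^ 2 := by
      apply sq_le_sq'
      · nlinarith [ht.1, ht.2, neg_abs_le a, le_abs_self a]
      · nlinarith [ht.1, ht.2, neg_abs_le a, le_abs_self a]
    linarith
  calc Real.exp (-(|a| + 1) ^ 2 / 2)
      = ∫ _t in Ioc a (a+1), Real.exp (-(|a| + 1) ^ 2 / 2) := by
        rw [setIntegral_const]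
        simp [Real.volume_Ioc]
    _ ≤ ∫ t in Ioc a (a+1), Real.exp (-t ^ 2 / 2) := by
        apply setIntegral_mono_on
        · exact integrableOn_const (by simp [Real.volume_Ioc])
        · exact g_int.integrableOn
        · exact measurableSet_Ioc
        · exact h0

lemma T_lb (x : ℝ) :
    Real.exp (-(|x| + 1) ^ 2 / 2) ≤ ∫ t in Ioi x, Real.exp (-t ^ 2 / 2) := by
  refine (lb_Ioc x).trans ?_
  apply setIntegral_mono_set g_int.integrableOn
  · exact Eventually.of_forall fun t => (Real.exp_pos _).le
  · exact HasSubset.Subset.eventuallyLE (Ioc_subset_Ioi_self)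

lemma T_pos (x : ℝ) : 0 < ∫ t in Ioi x, Real.exp (-t ^ 2 / 2) :=
  lt_of_lt_of_le (Real.exp_pos _) (T_lb x)

lemma Iic_lb (x : ℝ) : 0 < ∫ t in Iic x, Real.exp (-t ^ 2 / 2) := by
  refine lt_of_lt_of_le (lt_of_lt_of_le (Real.exp_pos _) (lb_Ioc (x-1))) ?_
  have : Ioc (x-1) (x-1+1) ⊆ Iic x := by
    intro t ht; simp only [mem_Iic]; have := ht.2; linarith
  apply setIntegral_mono_set g_int.integrableOn
  · exact Eventually.of_forall fun t => (Real.exp_pos _).le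
  · exact HasSubset.Subset.eventuallyLE this

lemma deriv_neg_exp (t : ℝ) :
    HasDerivAt (fun s : ℝ => -Real.exp (-s ^ 2 / 2)) (t * Real.exp (-t ^ 2 / 2)) t := by
  have h1 : HasDerivAt (fun s : ℝ => -s ^ 2 / 2) (-t) t := by
    have := ((hasDerivAt_pow 2 t).neg).div_const 2
    exact this.congr_deriv (by push_cast; ring)
  have := (h1.exp).neg
  exact this.congr_deriv (by ring)

lemma int_t_exp (x : ℝ) (hx : 0 ≤ x) :
    (∫ t in Ioi x, t * Real.exp (-t ^ 2 / 2)) = Real.exp (-x ^ 2 / 2) := by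
  have hderiv : ∀ t ∈ Ici x, HasDerivAt (fun s : ℝ => -Real.exp (-s ^ 2 / 2))
      (t * Real.exp (-t ^ 2 / 2)) t := fun t _ => deriv_neg_exp t
  have hnn : ∀ t ∈ Ioi x, 0 ≤ t * Real.exp (-t ^ 2 / 2) := fun t ht =>
    mul_nonneg (le_trans hx (le_of_lt ht)) (Real.exp_pos _).le
  have htend : Tendsto (fun s : ℝ => -Real.exp (-s ^ 2 / 2)) atTop (𝓝 0) := by
    rw [← neg_zero]
    apply Tendsto.neg
    apply Real.tendsto_exp_atBot.comp
    apply Tendsto.atBot_div_const (by norm_num)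
    exact tendsto_neg_atBot_iff.2 (tendsto_pow_atTop (by norm_num))
  have := integral_Ioi_of_hasDerivAt_of_nonneg' hderiv hnn htend
  rw [this]; ring

lemma intOn_t_exp (x : ℝ) (hx : 0 ≤ x) :
    IntegrableOn (fun t => t * Real.exp (-t ^ 2 / 2)) (Ioi x) := by
  have hderiv : ∀ t ∈ Ici x, HasDerivAt (fun s : ℝ => -Real.exp (-s ^ 2 / 2))
      (t * Real.exp (-t ^ 2 / 2)) t := fun t _ => deriv_neg_exp t
  have hnn : ∀ t ∈ Ioi x, 0 ≤ t * Real.exp (-t ^ 2 / 2) := fun t ht =>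
    mul_nonneg (le_trans hx (le_of_lt ht)) (Real.exp_pos _).le
  have htend : Tendsto (fun s : ℝ => -Real.exp (-s ^ 2 / 2)) atTop (𝓝 0) := by
    rw [← neg_zero]
    apply Tendsto.neg
    apply Real.tendsto_exp_atBot.comp
    apply Tendsto.atBot_div_const (by norm_num)
    exact tendsto_neg_atBot_iff.2 (tendsto_pow_atTop (by norm_num))
  exact integrableOn_Ioi_deriv_of_nonneg' hderiv hnn htend

lemma T_ub (x : ℝ) (hx : 0 < x) :
    (∫ t in Ioi x, Real.exp (-t ^ 2 / 2)) ≤ Real.exp (-x ^ 2 / 2) / x := by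
  have h1 : (∫ t in Ioi x, Real.exp (-t ^ 2 / 2)) ≤
      ∫ t in Ioi x, (t * Real.exp (-t ^ 2 / 2)) / x := by
    apply setIntegral_mono_on g_int.integrableOn
      ((intOn_t_exp x hx.le).div_const x) measurableSet_Ioi
    intro t ht
    rw [le_div_iff₀ hx]
    have h2 : x ≤ t := (le_of_lt ht)
    nlinarith [Real.exp_pos (-t^2/2)]
  rw [integral_div, int_t_exp x hx.le] at h1
  exact h1


lemma sqrt2pi_pos : 0 < Real.sqrt (2 * Real.pi) :=
  Real.sqrt_pos.2 (by positivity)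

lemma Iic_add_Ioi (x : ℝ) :
    (∫ t in Iic x, Real.exp (-t ^ 2 / 2)) + (∫ t in Ioi x, Real.exp (-t ^ 2 / 2))
      = Real.sqrt (2 * Real.pi) := by
  rw [← g_total]
  exact intervalIntegral.integral_Iic_add_Ioi g_int.integrableOn g_int.integrableOn

lemma one_sub_Phi (x : ℝ) :
    1 - stdNormalCDF x = (∫ t in Ioi x, Real.exp (-t ^ 2 / 2)) / Real.sqrt (2 * Real.pi) := by
  rw [stdNormalCDF, eq_div_iff sqrt2pi_pos.ne', sub_mul, div_mul_cancel₀ _ sqrt2pi_pos.ne',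
    one_mul]
  linarith [Iic_add_Ioi x]

lemma Phi_pos (x : ℝ) : 0 < stdNormalCDF x :=
  div_pos (Iic_lb x) sqrt2pi_pos

lemma Phi_lt_one (x : ℝ) : stdNormalCDF x < 1 := by
  have h := one_sub_Phi x
  have := div_pos (T_pos x) sqrt2pi_pos
  linarith

lemma Phi_mono {a b : ℝ} (hab : a ≤ b) : stdNormalCDF a ≤ stdNormalCDF b := by
  unfold stdNormalCDF
  gcongr
  · exact ae_of_all _ fun t => (Real.exp_pos _).le
  · exact g_int.integrableOn

lemma Phi_tendsto : Tendsto stdNormalCDF atTop (𝓝 1) := by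
  have hT : Tendsto (fun x => (∫ t in Ioi x, Real.exp (-t ^ 2 / 2)) / Real.sqrt (2 * Real.pi))
      atTop (𝓝 0) := by
    rw [show (0:ℝ) = 0 / Real.sqrt (2 * Real.pi) by simp]
    apply Tendsto.div_const
    refine tendsto_of_tendsto_of_tendsto_of_le_of_le'
      (g := fun _ : ℝ => (0:ℝ)) (h := fun x => Real.exp (-x ^ 2 / 2) / x)
      tendsto_const_nhds ?_ ?_ ?_
    · have h1 : Tendsto (fun x : ℝ => -x ^ 2 / 2) atTop atBot := by
        apply Tendsto.atBot_div_const (by norm_num)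
        exact tendsto_neg_atBot_iff.2 (tendsto_pow_atTop (by norm_num))
      have hnum : Tendsto (fun x : ℝ => Real.exp (-x ^ 2 / 2)) atTop (𝓝 0) := by
        simpa [Function.comp_def] using Real.tendsto_exp_atBot.comp h1
      exact hnum.div_atTop tendsto_id
    · exact Eventually.of_forall fun x => (T_pos x).le
    · filter_upwards [eventually_gt_atTop (0:ℝ)] with x hx
      exact T_ub x hx
  have : Tendsto (fun x => 1 - (1 - stdNormalCDF x)) atTop (𝓝 (1 - 0)) := by
    apply Tendsto.const_sub
    simpa only [one_sub_Phi] using hT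
  simpa using this

lemma xsq_atTop : Tendsto (fun x : ℝ => x ^ 2 / 2) atTop atTop :=
  (tendsto_pow_atTop (by norm_num)).atTop_div_const (by norm_num)

lemma tail_asymp :
    Tendsto (fun x : ℝ => (-Real.log (1 - stdNormalCDF x)) / (x ^ 2 / 2)) atTop (𝓝 1) := by
  set c := Real.log (Real.sqrt (2 * Real.pi)) with hc
  -- identity A x = c - log (T x)
  have hA : ∀ x : ℝ, -Real.log (1 - stdNormalCDF x)
      = c - Real.log (∫ t in Ioi x, Real.exp (-t ^ 2 / 2)) := by
    intro x
    rw [one_sub_Phi, Real.log_div (T_pos x).ne' sqrt2pi_pos.ne']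
    ring
  -- bounds for x ≥ 1
  have hub : ∀ x : ℝ, 1 ≤ x → -Real.log (1 - stdNormalCDF x) ≤ c + (x + 1) ^ 2 / 2 := by
    intro x hx
    rw [hA x]
    have h1 : -((x + 1) ^ 2) / 2 ≤ Real.log (∫ t in Ioi x, Real.exp (-t ^ 2 / 2)) := by
      have := Real.log_le_log (Real.exp_pos _) (T_lb x)
      rw [Real.log_exp] at this
      rwa [abs_of_nonneg (by linarith : (0:ℝ) ≤ x)] at this
    linarith
  have hlb : ∀ x : ℝ, 1 ≤ x →
      c + x ^ 2 / 2 + Real.log x ≤ -Real.log (1 - stdNormalCDF x) := by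
    intro x hx
    rw [hA x]
    have h1 : Real.log (∫ t in Ioi x, Real.exp (-t ^ 2 / 2))
        ≤ -(x ^ 2) / 2 - Real.log x := by
      have := Real.log_le_log (T_pos x) (T_ub x (by linarith))
      rwa [Real.log_div (Real.exp_pos _).ne' (by linarith : x ≠ 0), Real.log_exp] at this
    linarith
  -- lower comparison function tends to 1
  have hlow : Tendsto (fun x : ℝ => (c + x ^ 2 / 2 + Real.log x) / (x ^ 2 / 2)) atTop (𝓝 1) := by
    have h1 : Tendsto (fun x : ℝ => (c + Real.log x) / x * (2 / x) + 1) atTop (𝓝 1) := by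
      have ha : Tendsto (fun x : ℝ => (c + Real.log x) / x) atTop (𝓝 0) := by
        have hlog : Tendsto (fun x : ℝ => Real.log x / x) atTop (𝓝 0) := by
          have := Real.tendsto_pow_log_div_mul_add_atTop 1 0 1 one_ne_zero
          simpa using this
        have hconst : Tendsto (fun x : ℝ => c / x) atTop (𝓝 0) :=
          tendsto_const_nhds.div_atTop tendsto_id
        have := hconst.add hlog
        simp only [add_zero] at this
        refine this.congr fun x => ?_
        rw [← add_div]
      have hb : Tendsto (fun x : ℝ => 2 / x) atTop (𝓝 0) :=
        tendsto_const_nhds.div_atTop tendsto_id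
      have := (ha.mul hb).add_const 1
      simpa using this
    refine h1.congr' ?_
    filter_upwards [eventually_gt_atTop (0:ℝ)] with x hx
    field_simp
    ring
  -- upper comparison function tends to 1
  have hup : Tendsto (fun x : ℝ => (c + (x + 1) ^ 2 / 2) / (x ^ 2 / 2)) atTop (𝓝 1) := by
    have h1 : Tendsto (fun x : ℝ => 2 * c / x ^ 2 + (1 + 1 / x) ^ 2) atTop (𝓝 1) := by
      have ha : Tendsto (fun x : ℝ => 2 * c / x ^ 2) atTop (𝓝 0) :=
        tendsto_const_nhds.div_atTop (tendsto_pow_atTop (by norm_num))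
      have hb : Tendsto (fun x : ℝ => (1 + 1 / x) ^ 2) atTop (𝓝 1) := by
        have : Tendsto (fun x : ℝ => 1 + 1 / x) atTop (𝓝 1) := by
          have h0 : Tendsto (fun x : ℝ => 1 / x) atTop (𝓝 0) :=
            tendsto_const_nhds.div_atTop tendsto_id
          simpa using (tendsto_const_nhds (x := (1:ℝ)) (f := atTop)).add h0
        have := this.pow 2
        simpa using this
      have := ha.add hb
      simpa using this
    refine h1.congr' ?_
    filter_upwards [eventually_gt_atTop (0:ℝ)] with x hx
    field_simp
  refine tendsto_of_tendsto_of_tendsto_of_le_of_le' hlow hup ?_ ?_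
  · filter_upwards [eventually_ge_atTop (1:ℝ)] with x hx
    have hd : (0:ℝ) < x ^ 2 / 2 := by positivity
    exact div_le_div_of_nonneg_right (hlb x hx) hd.le
  · filter_upwards [eventually_ge_atTop (1:ℝ)] with x hx
    have hd : (0:ℝ) < x ^ 2 / 2 := by positivity
    exact div_le_div_of_nonneg_right (hub x hx) hd.le

lemma tendsto_atTop_of_ratio {α : Type*} {l : Filter α} {f g : α → ℝ}
    (h : Tendsto (fun x => f x / g x) l (𝓝 1)) (hg : Tendsto g l atTop) :
    Tendsto f l atTop := by
  have h2 := Tendsto.pos_mul_atTop zero_lt_one h hg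
  refine h2.congr' ?_
  filter_upwards [hg.eventually_gt_atTop 0] with x hx
  field_simp


end Aux

/-- Let `(X,Y)` have standard normal margins and copula `C` with conditional quantile
function `q u = C_{V|U}^{-1}(α|u)`.  Fix `α ∈ (0,1)` and suppose
`-log[1 - q(u)] ~ k_α [-log(1-u)]^η` as `u → 1⁻` with `k_α > 0`, `η ∈ (0,1]`.  Then the
conditional quantile `Qy x = F_{Y|X}^{-1}(α|x)` (characterized by `Φ(Qy x) = q(Φ x)`)
satisfies `Qy x ~ (2^{1-η} k_α)^{1/2} x^η` as `x → +∞`. -/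
theorem cond_quantile_upper_tail_shape (α k η : ℝ) (hα : α ∈ Ioo (0:ℝ) 1)
    (hk : 0 < k) (hη : η ∈ Ioc (0:ℝ) 1)
    (q : ℝ → ℝ) (hq_mem : ∀ u ∈ Ioo (0:ℝ) 1, q u ∈ Ioo (0:ℝ) 1)
    (hq : Tendsto (fun u : ℝ => (-Real.log (1 - q u)) / (k * (-Real.log (1 - u)) ^ η))
      (𝓝[<] (1:ℝ)) (𝓝 1))
    (Qy : ℝ → ℝ) (hQy : ∀ x : ℝ, stdNormalCDF (Qy x) = q (stdNormalCDF x)) :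
    Tendsto (fun x : ℝ => Qy x / ((2 ^ (1 - η) * k) ^ ((1:ℝ)/2) * x ^ η))
      atTop (𝓝 1) := by


  obtain ⟨hη0, hη1⟩ := hη
  set c : ℝ := (2 ^ (1 - η) * k) ^ ((1:ℝ)/2) with hcdef
  have h2pow : (0:ℝ) < 2 ^ (1 - η) := Real.rpow_pos_of_pos (by norm_num) _
  have hc : 0 < c := Real.rpow_pos_of_pos (by positivity) _
  set L : ℝ → ℝ := fun y => -Real.log (1 - stdNormalCDF y) with hLdef
  have hL_atTop : Tendsto L atTop atTop := tendsto_atTop_of_ratio tail_asymp xsq_atTop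
  have h1 : Tendsto stdNormalCDF atTop (𝓝[<] (1:ℝ)) :=
    tendsto_nhdsWithin_of_tendsto_nhds_of_eventually_within _ Phi_tendsto
      (Eventually.of_forall fun x => Phi_lt_one x)
  have h2 : Tendsto (fun x => L (Qy x) / (k * (L x) ^ η)) atTop (𝓝 1) := by
    have h := hq.comp h1
    simp only [Function.comp_def] at h
    refine h.congr fun x => ?_
    rw [hLdef]
    simp only []
    rw [← hQy x]
  have h3 : Tendsto (fun x : ℝ => (L x) ^ η / (x ^ 2 / 2) ^ η) atTop (𝓝 1) := by
    have h := tail_asymp.rpow_const (p := η) (Or.inr hη0.le)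
    rw [Real.one_rpow] at h
    refine h.congr' ?_
    filter_upwards [hL_atTop.eventually_ge_atTop 0, eventually_gt_atTop (0:ℝ)] with x hx1 hx2
    rw [Real.div_rpow hx1 (by positivity)]
  have h4 : Tendsto (fun x : ℝ => L (Qy x) / (k * (x ^ 2 / 2) ^ η)) atTop (𝓝 1) := by
    have h := h2.mul h3
    rw [mul_one] at h
    refine h.congr' ?_
    filter_upwards [hL_atTop.eventually_gt_atTop 0, eventually_gt_atTop (0:ℝ)] with x hx1 hx2
    have hA : (0:ℝ) < (L x) ^ η := Real.rpow_pos_of_pos hx1 η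
    have hB : (0:ℝ) < (x ^ 2 / 2) ^ η := Real.rpow_pos_of_pos (by positivity) η
    field_simp
  have hkB_atTop : Tendsto (fun x : ℝ => k * (x ^ 2 / 2) ^ η) atTop atTop := by
    apply Tendsto.const_mul_atTop hk
    exact (tendsto_rpow_atTop hη0).comp xsq_atTop
  have hLQ_atTop : Tendsto (fun x => L (Qy x)) atTop atTop := tendsto_atTop_of_ratio h4 hkB_atTop
  have hQy_atTop : Tendsto Qy atTop atTop := by
    rw [tendsto_atTop]
    intro M
    have hPhiQ : Tendsto (fun x => stdNormalCDF (Qy x)) atTop (𝓝 1) := by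
      have hexp : Tendsto (fun x => Real.exp (-(L (Qy x)))) atTop (𝓝 0) :=
        Real.tendsto_exp_atBot.comp (tendsto_neg_atBot_iff.2 hLQ_atTop)
      have heq : ∀ x, stdNormalCDF (Qy x) = 1 - Real.exp (-(L (Qy x))) := by
        intro x
        have hlt : (0:ℝ) < 1 - stdNormalCDF (Qy x) := by linarith [Phi_lt_one (Qy x)]
        rw [hLdef]
        simp only [neg_neg]
        rw [Real.exp_log hlt]
        ring
      have hts : Tendsto (fun x : ℝ => 1 - Real.exp (-(L (Qy x)))) atTop (𝓝 (1 - 0)) :=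
        tendsto_const_nhds.sub hexp
      rw [sub_zero] at hts
      exact Tendsto.congr (fun x => (heq x).symm) hts
    have hev : ∀ᶠ x in atTop, stdNormalCDF M < stdNormalCDF (Qy x) :=
      hPhiQ.eventually_const_lt (Phi_lt_one M)
    filter_upwards [hev] with x hx
    by_contra hMx
    push_neg at hMx
    exact absurd (Phi_mono hMx.le) (not_le.2 hx)
  have h6 : Tendsto (fun x => L (Qy x) / ((Qy x) ^ 2 / 2)) atTop (𝓝 1) := by
    have h := tail_asymp.comp hQy_atTop
    simpa [Function.comp_def] using h
  have h7 : Tendsto (fun x => ((Qy x) ^ 2 / 2) / (k * (x ^ 2 / 2) ^ η)) atTop (𝓝 1) := by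
    have h := h4.div h6 one_ne_zero
    rw [div_one] at h
    refine h.congr' ?_
    filter_upwards [hLQ_atTop.eventually_gt_atTop 0, hQy_atTop.eventually_gt_atTop 0,
      eventually_gt_atTop (0:ℝ)] with x hx1 hx2 hx3
    have hB : (0:ℝ) < (x ^ 2 / 2) ^ η := Real.rpow_pos_of_pos (by positivity) η
    simp only [Pi.div_apply]
    field_simp
  have h8 : Tendsto (fun x => (Qy x / (c * x ^ η)) ^ 2) atTop (𝓝 1) := by
    refine h7.congr' ?_
    filter_upwards [eventually_gt_atTop (0:ℝ), hQy_atTop.eventually_gt_atTop 0] with x hx hQ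
    have e1 : (x ^ 2 / 2) ^ η = x ^ (2 * η) / 2 ^ η := by
      rw [Real.div_rpow (by positivity) (by norm_num), ← Real.rpow_natCast x 2,
        ← Real.rpow_mul hx.le]
      norm_num
    have e2 : c ^ 2 = 2 * k / 2 ^ η := by
      rw [hcdef, ← Real.rpow_natCast (((2:ℝ) ^ (1 - η) * k) ^ ((1:ℝ)/2)) 2,
        ← Real.rpow_mul (by positivity)]
      norm_num
      rw [Real.rpow_sub (by norm_num) 1 η, Real.rpow_one]
      ring
    have e3 : (x ^ η) ^ 2 = x ^ (2 * η) := by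
      rw [← Real.rpow_natCast (x ^ η) 2, ← Real.rpow_mul hx.le]
      norm_num
      ring_nf
    have hxη : (0:ℝ) < x ^ η := Real.rpow_pos_of_pos hx η
    have hx2η : (0:ℝ) < x ^ (2 * η) := Real.rpow_pos_of_pos hx _
    have h2η : (0:ℝ) < (2:ℝ) ^ η := Real.rpow_pos_of_pos (by norm_num) η
    rw [e1, div_pow, mul_pow, e2, e3]
    field_simp
  have h9 : Tendsto (fun x => Real.sqrt ((Qy x / (c * x ^ η)) ^ 2)) atTop (𝓝 1) := by
    have h := (Real.continuous_sqrt.tendsto 1).comp h8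
    simpa [Function.comp_def] using h
  refine h9.congr' ?_
  filter_upwards [eventually_gt_atTop (0:ℝ), hQy_atTop.eventually_gt_atTop 0] with x hx hQ
  have hxη : (0:ℝ) < x ^ η := Real.rpow_pos_of_pos hx η
  rw [Real.sqrt_sq (by positivity)]
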